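/- arXiv:1209.2361 — 5 statements merged into one kernel-verified Lean document; each statement's English description precedes it below -/
import Mathlib

section
/- The min-max problem θ = min{ max_{a∈A_up} d_a/C_a , min_{b∈A_down} max_{∅≠A₁⊆A_up} (s_b − Σ_{α∈A_up∖A₁} d_α ξ_{α→b}) / (Σ_{a∈A₁} C_a ξ_{a→b}) } has a unique solution θ, and θ ∈ [0,1]. -/
open Finset

/-- The critical demand level min-max problem has a unique solution θ, and θ ∈ [0,1]. -/
theorem critical_demand_level_exists_unique
    {ι κ : Type} [Fintype ι] [Fintype κ] [Nonempty ι] [Nonempty κ] [DecidableEq ι]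
    (C d : ι → ℝ) (s : κ → ℝ) (ξ : ι → κ → ℝ)
    (hC : ∀ a, 0 < C a) (hd0 : ∀ a, 0 ≤ d a) (hdC : ∀ a, d a ≤ C a)
    (hs : ∀ b, 0 ≤ s b) (hξ : ∀ a b, 0 ≤ ξ a b)
    (hξsum : ∀ a, ∑ b, ξ a b = 1)
    (hpos : ∀ A₁ : Finset ι, A₁.Nonempty → ∀ b, 0 < ∑ a ∈ A₁, C a * ξ a b) :
    ∃! θ : ℝ,
      θ = min
          ((Finset.univ : Finset ι).sup' Finset.univ_nonempty (fun a => d a / C a))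
          ((Finset.univ : Finset κ).inf' Finset.univ_nonempty (fun b =>
            (Finset.univ : Finset {A₁ : Finset ι // A₁.Nonempty}).sup'
              ⟨⟨Finset.univ, Finset.univ_nonempty⟩, Finset.mem_univ _⟩ (fun A₁ =>
                (s b - ∑ α ∈ (A₁.1)ᶜ, d α * ξ α b) / (∑ a ∈ A₁.1, C a * ξ a b))))
        ∧ θ ∈ Set.Icc (0 : ℝ) 1 := by
  refine ⟨_, ⟨rfl, ?_, ?_⟩, fun θ' h => h.1⟩
  · -- 0 ≤ min
    apply le_min
    · -- the demand term: sup' ≥ value at some a ≥ 0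
      obtain ⟨a⟩ := ‹Nonempty ι›
      exact le_trans (div_nonneg (hd0 a) (hC a).le)
        (Finset.le_sup' (fun a => d a / C a) (Finset.mem_univ a))
    · -- the supply term: each inner sup' ≥ value at A₁ = univ ≥ 0
      apply Finset.le_inf'
      intro b _
      refine le_trans ?_ (Finset.le_sup'
        (f := fun A₁ : {A₁ : Finset ι // A₁.Nonempty} =>
          (s b - ∑ α ∈ (A₁.1)ᶜ, d α * ξ α b) / (∑ a ∈ A₁.1, C a * ξ a b))
        (Finset.mem_univ ⟨Finset.univ, Finset.univ_nonempty⟩))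
      have hc : ((Finset.univ : Finset ι))ᶜ = (∅ : Finset ι) := Finset.compl_univ
      rw [hc, Finset.sum_empty, sub_zero]
      exact div_nonneg (hs b) (hpos Finset.univ Finset.univ_nonempty b).le
  · -- min ≤ 1 via demand term
    refine le_trans (min_le_left _ _) ?_
    apply Finset.sup'_le
    intro a _
    exact div_le_one_of_le₀ (hdC a) (hC a).le
end

section
/- If θ = max_{a∈A_up} d_a/C_a (i.e., the first term achieves the minimum), then for every b ∈ A_down the in-flux f_b = Σ_{a∈A_up} min{d_a, θ C_a} ξ_{a→b} equals Σ_a d_a ξ_{a→b} and satisfies f_b ≤ s_b. -/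
open Finset

/-- If θ equals the maximum demand level, then each in-flux
f_b = Σ_a min{d_a, θ C_a} ξ_{a→b} equals Σ_a d_a ξ_{a→b} and is bounded by the supply s_b. -/
theorem influx_eq_demand_of_theta_max
    {ι κ : Type} [Fintype ι] [Fintype κ] [Nonempty ι] [Nonempty κ] [DecidableEq ι]
    (C d : ι → ℝ) (s : κ → ℝ) (ξ : ι → κ → ℝ)
    (hC : ∀ a, 0 < C a) (hd0 : ∀ a, 0 ≤ d a) (hdC : ∀ a, d a ≤ C a)
    (hs : ∀ b, 0 ≤ s b) (hξ : ∀ a b, 0 ≤ ξ a b)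
    (hξsum : ∀ a, ∑ b, ξ a b = 1)
    (hpos : ∀ A₁ : Finset ι, A₁.Nonempty → ∀ b, 0 < ∑ a ∈ A₁, C a * ξ a b)
    (θ : ℝ)
    (hθ : θ = min
          ((Finset.univ : Finset ι).sup' Finset.univ_nonempty (fun a => d a / C a))
          ((Finset.univ : Finset κ).inf' Finset.univ_nonempty (fun b =>
            (Finset.univ : Finset {A₁ : Finset ι // A₁.Nonempty}).sup'
              ⟨⟨Finset.univ, Finset.univ_nonempty⟩, Finset.mem_univ _⟩ (fun A₁ =>
                (s b - ∑ α ∈ (A₁.1)ᶜ, d α * ξ α b) / (∑ a ∈ A₁.1, C a * ξ a b)))))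
    (hmax : θ = (Finset.univ : Finset ι).sup' Finset.univ_nonempty (fun a => d a / C a)) :
    ∀ b, (∑ a, min (d a) (θ * C a) * ξ a b) = ∑ a, d a * ξ a b ∧
      (∑ a, min (d a) (θ * C a) * ξ a b) ≤ s b := by
  have hθmax : ∀ a, d a ≤ θ * C a := by
    intro a
    have h1 : d a / C a ≤ θ := by
      rw [hmax]; exact Finset.le_sup' (fun a => d a / C a) (Finset.mem_univ a)
    rw [div_le_iff₀ (hC a)] at h1
    nlinarith [hC a]
  have hmin : ∀ a, min (d a) (θ * C a) = d a := fun a => min_eq_left (hθmax a)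
  intro b
  have heq : (∑ a, min (d a) (θ * C a) * ξ a b) = ∑ a, d a * ξ a b :=
    Finset.sum_congr rfl (fun a _ => by rw [hmin a])
  refine ⟨heq, ?_⟩
  rw [heq]
  -- θ ≤ inf' ...
  have hθY : θ ≤ (Finset.univ : Finset κ).inf' Finset.univ_nonempty (fun b =>
      (Finset.univ : Finset {A₁ : Finset ι // A₁.Nonempty}).sup'
        ⟨⟨Finset.univ, Finset.univ_nonempty⟩, Finset.mem_univ _⟩ (fun A₁ =>
          (s b - ∑ α ∈ (A₁.1)ᶜ, d α * ξ α b) / (∑ a ∈ A₁.1, C a * ξ a b))) := by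
    exact hθ.trans_le (min_le_right _ _)
  have hθb : θ ≤ (Finset.univ : Finset {A₁ : Finset ι // A₁.Nonempty}).sup'
        ⟨⟨Finset.univ, Finset.univ_nonempty⟩, Finset.mem_univ _⟩ (fun A₁ =>
          (s b - ∑ α ∈ (A₁.1)ᶜ, d α * ξ α b) / (∑ a ∈ A₁.1, C a * ξ a b)) :=
    le_trans hθY (Finset.inf'_le _ (Finset.mem_univ b))
  obtain ⟨A₁, -, hA₁⟩ := Finset.exists_mem_eq_sup'
    (⟨⟨Finset.univ, Finset.univ_nonempty⟩, Finset.mem_univ _⟩ :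
      (Finset.univ : Finset {A₁ : Finset ι // A₁.Nonempty}).Nonempty)
    (fun A₁ => (s b - ∑ α ∈ (A₁.1)ᶜ, d α * ξ α b) / (∑ a ∈ A₁.1, C a * ξ a b))
  rw [hA₁] at hθb
  have hden : 0 < ∑ a ∈ A₁.1, C a * ξ a b := hpos A₁.1 A₁.2 b
  rw [le_div_iff₀ hden] at hθb
  have h1 : ∑ a ∈ A₁.1, d a * ξ a b ≤ θ * ∑ a ∈ A₁.1, C a * ξ a b := by
    rw [Finset.mul_sum]
    refine Finset.sum_le_sum (fun a _ => ?_)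
    rw [← mul_assoc]
    exact mul_le_mul_of_nonneg_right (hθmax a) (hξ a b)
  have hsplit : ∑ a, d a * ξ a b = (∑ a ∈ A₁.1, d a * ξ a b) + ∑ a ∈ (A₁.1)ᶜ, d a * ξ a b :=
    (Finset.sum_add_sum_compl A₁.1 _).symm
  linarith
end

section
/- The fair-merge out-flux g₁(d₁, d₂, s₃) = min{d₁, max{s₃ − d₂, (C₁/(C₁+C₂)) s₃}} is Lipschitz continuous in (d₁, d₂, s₃), and satisfies 0 ≤ g₁ ≤ d₁ and g₁ + g₂ = min{d₁ + d₂, s₃} where g₂ := min{d₁+d₂, s₃} − g₁ satisfies 0 ≤ g₂ ≤ d₂. -/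
/-- The fair-merge out-flux g₁ is Lipschitz continuous in (d₁, d₂, s₃), and on the
physical domain satisfies 0 ≤ g₁ ≤ d₁, g₁ + g₂ = min{d₁+d₂, s₃}, and 0 ≤ g₂ ≤ d₂. -/
theorem fair_merge_flux_properties (C₁ C₂ : ℝ) (hC₁ : 0 < C₁) (hC₂ : 0 < C₂) :
    (∃ K : NNReal, LipschitzWith K (fun p : ℝ × ℝ × ℝ =>
        min p.1 (max (p.2.2 - p.2.1) (C₁ / (C₁ + C₂) * p.2.2)))) ∧
    ∀ d₁ d₂ s₃ : ℝ, d₁ ∈ Set.Icc 0 C₁ → d₂ ∈ Set.Icc 0 C₂ → 0 ≤ s₃ →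
      0 ≤ min d₁ (max (s₃ - d₂) (C₁ / (C₁ + C₂) * s₃)) ∧
      min d₁ (max (s₃ - d₂) (C₁ / (C₁ + C₂) * s₃)) ≤ d₁ ∧
      min d₁ (max (s₃ - d₂) (C₁ / (C₁ + C₂) * s₃)) +
        (min (d₁ + d₂) s₃ - min d₁ (max (s₃ - d₂) (C₁ / (C₁ + C₂) * s₃)))
        = min (d₁ + d₂) s₃ ∧
      0 ≤ min (d₁ + d₂) s₃ - min d₁ (max (s₃ - d₂) (C₁ / (C₁ + C₂) * s₃)) ∧
      min (d₁ + d₂) s₃ - min d₁ (max (s₃ - d₂) (C₁ / (C₁ + C₂) * s₃)) ≤ d₂ := by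
  have hsum : 0 < C₁ + C₂ := by linarith
  set α : ℝ := C₁ / (C₁ + C₂) with hα
  have hα0 : 0 ≤ α := div_nonneg hC₁.le hsum.le
  have hα1 : α ≤ 1 := by
    rw [hα, div_le_one hsum]; linarith
  constructor
  · -- Lipschitz
    have h1 : LipschitzWith 1 (fun p : ℝ × ℝ × ℝ => p.1) := LipschitzWith.prod_fst
    have hs3 : LipschitzWith (1 * 1) (fun p : ℝ × ℝ × ℝ => p.2.2) :=
      LipschitzWith.prod_snd.comp LipschitzWith.prod_snd
    have hd2 : LipschitzWith (1 * 1) (fun p : ℝ × ℝ × ℝ => p.2.1) :=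
      LipschitzWith.prod_fst.comp LipschitzWith.prod_snd
    have hsub : LipschitzWith (1 * 1 + 1 * 1) (fun p : ℝ × ℝ × ℝ => p.2.2 - p.2.1) :=
      hs3.sub hd2
    have hmul : LipschitzWith (‖α‖₊ * (1 * 1)) (fun p : ℝ × ℝ × ℝ => α * p.2.2) := by
      have := (lipschitzWith_smul (β := ℝ) α).comp hs3
      simpa [smul_eq_mul, Function.comp_def] using this
    exact ⟨_, h1.min (hsub.max hmul)⟩
  · intro d₁ d₂ s₃ ⟨hd₁0, hd₁C⟩ ⟨hd₂0, hd₂C⟩ hs₃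
    have hαs : 0 ≤ α * s₃ := mul_nonneg hα0 hs₃
    have hαs1 : α * s₃ ≤ s₃ := by nlinarith
    refine ⟨le_min hd₁0 (le_max_of_le_right hαs), min_le_left _ _, by ring, ?_, ?_⟩
    · have h1 : min d₁ (max (s₃ - d₂) (α * s₃)) ≤ min (d₁ + d₂) s₃ := by
        apply le_min
        · exact (min_le_left _ _).trans (by linarith)
        · exact (min_le_right _ _).trans (max_le (by linarith) hαs1)
      linarith
    · rcases le_or_gt (d₁ + d₂) s₃ with h | h
      · rw [min_eq_left h]
        have : d₁ ≤ max (s₃ - d₂) (α * s₃) := le_max_of_le_left (by linarith)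
        rw [min_eq_left this]; linarith
      · rw [min_eq_right h.le]
        have : s₃ - d₂ ≤ min d₁ (max (s₃ - d₂) (α * s₃)) :=
          le_min (by linarith) (le_max_left _ _)
        linarith
end

section
/- Invariance of density bounds: suppose k : [0,T] → ℝ solves dk/dt = (1/L)(f(t) − g(t)) with L > 0, where 0 ≤ f(t) ≤ S(k(t)) and 0 ≤ g(t) ≤ D(k(t)) for continuous functions S, D : ℝ → ℝ satisfying D(k) = 0 for k ≤ 0 and S(k) = 0 for k ≥ k_j. If k(0) ∈ [0, k_j], then k(t) ∈ [0, k_j] for all t ∈ [0,T]. -/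
/-- Invariance helper: if `k' ≥ 0` whenever `k < 0` on `[0,T]`, and `k 0 ≥ 0`,
then `k ≥ 0` on `[0,T]`. -/
lemma nonneg_invariant_aux (T : ℝ) (k k' : ℝ → ℝ)
    (hderiv : ∀ t ∈ Set.Icc 0 T, HasDerivAt k (k' t) t)
    (hsign : ∀ t ∈ Set.Icc 0 T, k t < 0 → 0 ≤ k' t)
    (h0 : 0 ≤ k 0) : ∀ t ∈ Set.Icc 0 T, 0 ≤ k t := by
  intro t0 ht0
  by_contra hneg
  push_neg at hneg
  have hkc : ContinuousOn k (Set.Icc 0 T) := fun x hx =>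
    ((hderiv x hx).continuousAt).continuousWithinAt
  have hsub : Set.Icc (0:ℝ) t0 ⊆ Set.Icc 0 T :=
    Set.Icc_subset_Icc le_rfl ht0.2
  set A : Set ℝ := Set.Icc 0 t0 ∩ k ⁻¹' Set.Ici 0 with hA
  have hAne : A.Nonempty := ⟨0, ⟨le_rfl, ht0.1⟩, h0⟩
  have hAbdd : BddAbove A := ⟨t0, fun x hx => hx.1.2⟩
  have hAclosed : IsClosed A :=
    (hkc.mono hsub).preimage_isClosed_of_isClosed isClosed_Icc isClosed_Ici
  set s := sSup A with hs
  have hsA : s ∈ A := hAclosed.csSup_mem hAne hAbdd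
  have hks : 0 ≤ k s := hsA.2
  have hsIcc : s ∈ Set.Icc 0 t0 := hsA.1
  have hst0 : s < t0 := lt_of_le_of_ne hsIcc.2 (fun h => by
    rw [h] at hks; exact absurd hneg (not_lt.mpr hks))
  -- on (s, t0], k < 0
  have hklt : ∀ u, s < u → u ≤ t0 → k u < 0 := by
    intro u hsu hut0
    by_contra h
    push_neg at h
    have : u ∈ A := ⟨⟨le_trans hsIcc.1 hsu.le, hut0⟩, h⟩
    exact absurd (le_csSup hAbdd this) (not_le.mpr hsu)
  -- k is monotone on [s, t0]
  have hsubT : Set.Icc s t0 ⊆ Set.Icc 0 T :=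
    Set.Icc_subset_Icc hsIcc.1 ht0.2
  have hmono : MonotoneOn k (Set.Icc s t0) := by
    apply monotoneOn_of_deriv_nonneg (convex_Icc s t0)
      (hkc.mono hsubT)
    · intro x hx
      exact ((hderiv x (hsubT (interior_subset hx))).differentiableAt).differentiableWithinAt
    · intro x hx
      rw [interior_Icc] at hx
      rw [(hderiv x (hsubT ⟨hx.1.le, hx.2.le⟩)).deriv]
      exact hsign x (hsubT ⟨hx.1.le, hx.2.le⟩) (hklt x hx.1 hx.2.le)
  have : k s ≤ k t0 :=
    hmono ⟨le_rfl, hst0.le⟩ ⟨hst0.le, le_rfl⟩ hst0.le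
  linarith

/-- Invariance of density bounds for a single link: if dk/dt = (1/L)(f − g) with
0 ≤ f ≤ S(k) and 0 ≤ g ≤ D(k), where D vanishes for k ≤ 0 and S vanishes for k ≥ k_j,
then k(t) stays in [0, k_j]. -/
theorem link_density_invariant (T L kj : ℝ) (hT : 0 ≤ T) (hL : 0 < L) (hkj : 0 < kj)
    (k f g : ℝ → ℝ) (S D : ℝ → ℝ) (hScont : Continuous S) (hDcont : Continuous D)
    (hfc : ContinuousOn f (Set.Icc 0 T)) (hgc : ContinuousOn g (Set.Icc 0 T))
    (hderiv : ∀ t ∈ Set.Icc 0 T, HasDerivAt k ((1 / L) * (f t - g t)) t)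
    (hf : ∀ t ∈ Set.Icc 0 T, 0 ≤ f t ∧ f t ≤ S (k t))
    (hg : ∀ t ∈ Set.Icc 0 T, 0 ≤ g t ∧ g t ≤ D (k t))
    (hD0 : ∀ x ≤ (0 : ℝ), D x = 0) (hSj : ∀ x, kj ≤ x → S x = 0)
    (h0 : k 0 ∈ Set.Icc 0 kj) :
    ∀ t ∈ Set.Icc 0 T, k t ∈ Set.Icc 0 kj := by
  have hLinv : 0 < 1 / L := by positivity
  -- lower bound
  have hlow : ∀ t ∈ Set.Icc 0 T, 0 ≤ k t := by
    apply nonneg_invariant_aux T k (fun t => (1 / L) * (f t - g t)) hderiv _ h0.1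
    intro t ht hkt
    have hgz : g t = 0 := le_antisymm (by
      have := (hg t ht).2
      rwa [hD0 (k t) hkt.le] at this) (hg t ht).1
    have hft := (hf t ht).1
    show 0 ≤ 1 / L * (f t - g t)
    rw [hgz, sub_zero]
    exact mul_nonneg hLinv.le hft
  -- upper bound via kj - k
  have hup : ∀ t ∈ Set.Icc 0 T, 0 ≤ kj - k t := by
    apply nonneg_invariant_aux T (fun t => kj - k t)
      (fun t => (1 / L) * (g t - f t))
    · intro t ht
      have : HasDerivAt (fun t => kj - k t) (-((1 / L) * (f t - g t))) t :=
        ((hderiv t ht).const_sub kj)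
      convert this using 1
      ring
    · intro t ht hkt
      have hkj_le : kj ≤ k t := by linarith
      have hfz : f t = 0 := le_antisymm (by
        have := (hf t ht).2
        rwa [hSj (k t) hkj_le] at this) (hf t ht).1
      have hgt := (hg t ht).1
      show 0 ≤ 1 / L * (g t - f t)
      rw [hfz, sub_zero]
      exact mul_nonneg hLinv.le hgt
    · simp only [sub_nonneg]
      exact h0.2
  intro t ht
  exact ⟨hlow t ht, by linarith [hup t ht]⟩
end

section
/- In the discrete link queue update k^{i+1} = k^i + (Δt/L)(f^i − g^i), if 0 ≤ f^i ≤ S(k^i), 0 ≤ g^i ≤ D(k^i), D(k) ≤ V k, S(k) ≤ W(k_j − k), and Δt ≤ L / max{V, W}, then k^i ∈ [0, k_j] implies k^{i+1} ∈ [0, k_j]. -/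
/-- Discrete link queue update under the CFL condition preserves the density bounds:
if k^{i+1} = k^i + (Δt/L)(f − g) with 0 ≤ f ≤ S(k^i), 0 ≤ g ≤ D(k^i), D(k) ≤ Vk,
S(k) ≤ W(k_j − k), and Δt ≤ L/max{V,W}, then k^i ∈ [0,k_j] implies k^{i+1} ∈ [0,k_j]. -/
theorem discrete_link_queue_invariant (L V W kj Δt : ℝ)
    (hL : 0 < L) (hV : 0 < V) (hW : 0 < W) (hkj : 0 < kj) (hΔt : 0 < Δt)
    (hCFL : Δt ≤ L / max V W)
    (D S : ℝ → ℝ)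
    (hD : ∀ k ∈ Set.Icc 0 kj, 0 ≤ D k ∧ D k ≤ V * k)
    (hS : ∀ k ∈ Set.Icc 0 kj, 0 ≤ S k ∧ S k ≤ W * (kj - k))
    (ki f g : ℝ) (hki : ki ∈ Set.Icc 0 kj)
    (hf : 0 ≤ f ∧ f ≤ S ki) (hg : 0 ≤ g ∧ g ≤ D ki) :
    ki + (Δt / L) * (f - g) ∈ Set.Icc 0 kj := by
  obtain ⟨hki0, hki1⟩ := hki
  obtain ⟨hf0, hf1⟩ := hf
  obtain ⟨hg0, hg1⟩ := hg
  obtain ⟨hD0, hD1⟩ := hD ki ⟨hki0, hki1⟩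
  obtain ⟨hS0, hS1⟩ := hS ki ⟨hki0, hki1⟩
  have hmax : 0 < max V W := lt_of_lt_of_le hV (le_max_left _ _)
  set c := Δt / L with hc
  have hc0 : 0 < c := div_pos hΔt hL
  have hcmax : c * max V W ≤ 1 := by
    rw [hc, div_mul_eq_mul_div, div_le_one hL]
    calc Δt * max V W ≤ (L / max V W) * max V W :=
          mul_le_mul_of_nonneg_right hCFL hmax.le
      _ = L := div_mul_cancel₀ L hmax.ne'
  have hcV : c * V ≤ 1 :=
    le_trans (mul_le_mul_of_nonneg_left (le_max_left V W) hc0.le) hcmax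
  have hcW : c * W ≤ 1 :=
    le_trans (mul_le_mul_of_nonneg_left (le_max_right V W) hc0.le) hcmax
  constructor
  · have h1 : c * g ≤ c * (V * ki) :=
      mul_le_mul_of_nonneg_left (le_trans hg1 hD1) hc0.le
    have h2 : c * (V * ki) ≤ ki := by
      calc c * (V * ki) = (c * V) * ki := by ring
        _ ≤ 1 * ki := mul_le_mul_of_nonneg_right hcV hki0
        _ = ki := one_mul ki
    nlinarith
  · have h1 : c * f ≤ c * (W * (kj - ki)) :=
      mul_le_mul_of_nonneg_left (le_trans hf1 hS1) hc0.le
    have h2 : c * (W * (kj - ki)) ≤ kj - ki := by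
      calc c * (W * (kj - ki)) = (c * W) * (kj - ki) := by ring
        _ ≤ 1 * (kj - ki) := mul_le_mul_of_nonneg_right hcW (by linarith)
        _ = kj - ki := one_mul _
    nlinarith
end
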